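/- arXiv:1708.02818 — 4 statements merged into one kernel-verified Lean document; each statement's English description precedes it below -/
import Mathlib

section
/- Let X, Y be positive definite Hermitian matrices, β := M(Y,X) and α := m(Y,X) = 1/M(X,Y), with α ≤ β. Then for every τ ∈ ℝ, the matrix χ(τ) := ((β^τ − α^τ)/(β − α))·Y + ((β α^τ − α β^τ)/(β − α))·X (interpreted as α^τ X when β = α) is positive definite. -/
open Matrix
open scoped ComplexOrder

section Helpers

variable {n : ℕ}

private lemma herm_dot_star {M : Matrix (Fin n) (Fin n) ℂ} (hM : M.IsHermitian) (x : Fin n → ℂ) :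
    star (star x ⬝ᵥ M *ᵥ x) = star x ⬝ᵥ M *ᵥ x := by
  rw [← star_dotProduct, star_mulVec, hM.eq, dotProduct_mulVec]

private lemma herm_dot_nonneg_iff {M : Matrix (Fin n) (Fin n) ℂ} (hM : M.IsHermitian)
    (x : Fin n → ℂ) :
    0 ≤ star x ⬝ᵥ M *ᵥ x ↔ 0 ≤ Complex.re (star x ⬝ᵥ M *ᵥ x) := by
  rw [Complex.nonneg_iff]
  have h := herm_dot_star hM x
  rw [Complex.ext_iff] at h
  simp only [Complex.star_def, Complex.conj_re, Complex.conj_im] at h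
  exact ⟨fun h' => h'.1, fun h' => ⟨h', by linarith [h.2]⟩⟩

private lemma posSemidef_iff_re {M : Matrix (Fin n) (Fin n) ℂ} (hM : M.IsHermitian) :
    M.PosSemidef ↔ ∀ x, 0 ≤ Complex.re (star x ⬝ᵥ M *ᵥ x) :=
  ⟨fun h x => (herm_dot_nonneg_iff hM x).mp (h.dotProduct_mulVec_nonneg x),
   fun h => PosSemidef.of_dotProduct_mulVec_nonneg hM fun x => (herm_dot_nonneg_iff hM x).mpr (h x)⟩

private lemma smul_isHermitian {c : ℝ} {A : Matrix (Fin n) (Fin n) ℂ}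
    (hA : A.IsHermitian) : (c • A).IsHermitian := by
  unfold Matrix.IsHermitian
  rw [conjTranspose_smul, hA.eq]
  congr 1

private lemma smul_posSemidef {c : ℝ} (hc : 0 ≤ c) {A : Matrix (Fin n) (Fin n) ℂ}
    (hA : A.PosSemidef) : (c • A).PosSemidef := by
  refine PosSemidef.of_dotProduct_mulVec_nonneg (smul_isHermitian hA.1) fun x => ?_
  rw [smul_mulVec, dotProduct_smul]
  exact smul_nonneg (by exact_mod_cast hc) (hA.dotProduct_mulVec_nonneg x)

private lemma smul_posDef {c : ℝ} (hc : 0 < c) {A : Matrix (Fin n) (Fin n) ℂ}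
    (hA : A.PosDef) : (c • A).PosDef := by
  refine PosDef.of_dotProduct_mulVec_pos (smul_isHermitian hA.1) fun x hx => ?_
  rw [smul_mulVec, dotProduct_smul]
  exact smul_pos (by exact_mod_cast hc) (hA.dotProduct_mulVec_pos hx)

private lemma re_form_sub_smul (A B : Matrix (Fin n) (Fin n) ℂ) (c : ℝ) (x : Fin n → ℂ) :
    Complex.re (star x ⬝ᵥ (A - c • B) *ᵥ x)
      = Complex.re (star x ⬝ᵥ A *ᵥ x) - c * Complex.re (star x ⬝ᵥ B *ᵥ x) := by
  rw [sub_mulVec, smul_mulVec, dotProduct_sub, dotProduct_smul, Complex.sub_re]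
  congr 1
  simp [Complex.real_smul]

private lemma re_form_smul_sub (A B : Matrix (Fin n) (Fin n) ℂ) (c : ℝ) (x : Fin n → ℂ) :
    Complex.re (star x ⬝ᵥ (c • A - B) *ᵥ x)
      = c * Complex.re (star x ⬝ᵥ A *ᵥ x) - Complex.re (star x ⬝ᵥ B *ᵥ x) := by
  have h : c • A - B = -(B - c • A) := by module
  rw [h, neg_mulVec, dotProduct_neg, Complex.neg_re, re_form_sub_smul]
  ring

private lemma exists_smul_sub_posSemidef [NeZero n] {X Y : Matrix (Fin n) (Fin n) ℂ}
    (hX : X.PosDef) (hY : Y.IsHermitian) : ∃ l : ℝ, (l • X - Y).PosSemidef := by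
  classical
  open scoped MatrixOrder in
  set S := CFC.sqrt X with hSdef
  open scoped MatrixOrder in
  have hS : S.PosSemidef := (CFC.sqrt_nonneg X).posSemidef
  open scoped MatrixOrder in
  have hSS : S * S = X := CFC.sqrt_mul_sqrt_self X hX.posSemidef.nonneg
  have hdetX : IsUnit X.det := by
    have := hX.det_pos
    exact isUnit_iff_ne_zero.mpr (by exact_mod_cast this.ne')
  have hdetS : IsUnit S.det := by
    have : S.det * S.det = X.det := by rw [← det_mul, hSS]
    exact isUnit_of_mul_isUnit_left (this ▸ hdetX)
  set B := S⁻¹ * Y * S⁻¹ with hBdef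
  have hSinv : S⁻¹.IsHermitian := hS.1.inv
  have hB : B.IsHermitian := by
    unfold Matrix.IsHermitian
    rw [hBdef, conjTranspose_mul, conjTranspose_mul, hSinv.eq, hY.eq, mul_assoc]
  obtain ⟨i0⟩ : Nonempty (Fin n) := ⟨⟨0, Nat.pos_of_ne_zero (NeZero.ne n)⟩⟩
  set l : ℝ := Finset.univ.sup' ⟨i0, Finset.mem_univ i0⟩ hB.eigenvalues with hl
  have hdiag : ((fun i => ((l - hB.eigenvalues i : ℝ) : ℂ)) : Fin n → ℂ) ≥ 0 := by
    intro i
    rw [Pi.zero_apply, Complex.zero_le_real]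
    have := Finset.le_sup' hB.eigenvalues (Finset.mem_univ i)
    linarith
  have hDpsd : (diagonal (fun i => ((l - hB.eigenvalues i : ℝ) : ℂ))).PosSemidef :=
    Matrix.PosSemidef.diagonal hdiag
  set U : Matrix (Fin n) (Fin n) ℂ := (hB.eigenvectorUnitary : Matrix (Fin n) (Fin n) ℂ) with hU
  have hUU : U * star U = 1 := (Matrix.mem_unitaryGroup_iff).mp hB.eigenvectorUnitary.2
  have key : l • (1 : Matrix (Fin n) (Fin n) ℂ) - B
      = U * diagonal (fun i => ((l - hB.eigenvalues i : ℝ) : ℂ)) * Uᴴ := by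
    have hspec := hB.spectral_theorem
    rw [Unitary.conjStarAlgAut_apply] at hspec
    have : diagonal (fun i => ((l - hB.eigenvalues i : ℝ) : ℂ))
        = l • (1 : Matrix (Fin n) (Fin n) ℂ) - diagonal (RCLike.ofReal ∘ hB.eigenvalues) := by
      ext i j
      by_cases h : i = j
      · subst h
        simp [Matrix.diagonal_apply_eq, Matrix.one_apply_eq, Complex.real_smul,
          Function.comp]
      · simp [Matrix.diagonal_apply_ne _ h, Matrix.one_apply_ne h]
    rw [this, Matrix.mul_sub, Matrix.sub_mul, ← star_eq_conjTranspose, Matrix.mul_smul,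
      Matrix.smul_mul, mul_one, hUU, ← hspec]
  have h1 : (l • (1 : Matrix (Fin n) (Fin n) ℂ) - B).PosSemidef := by
    rw [key, ← star_eq_conjTranspose]
    exact hDpsd.mul_mul_conjTranspose_same U
  refine ⟨l, ?_⟩
  have key2 : l • X - Y = S * (l • (1 : Matrix (Fin n) (Fin n) ℂ) - B) * Sᴴ := by
    rw [hS.1.eq, Matrix.mul_sub, Matrix.sub_mul, Matrix.mul_smul, Matrix.smul_mul, mul_one, hSS,
      hBdef]
    congr 1
    rw [← mul_assoc, ← mul_assoc, Matrix.mul_nonsing_inv S hdetS, one_mul, mul_assoc,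
      Matrix.nonsing_inv_mul S hdetS, mul_one]
  rw [key2]
  exact h1.mul_mul_conjTranspose_same S

end Helpers

/-- With `β := M(Y,X)` and `α := m(Y,X)`, `α ≤ β`, the projective
straight-line path `χ(τ)` (interpreted as `α^τ X` when `β = α`) is positive definite
for every `τ ∈ ℝ`. -/
theorem projective_path_posdef
    {n : ℕ} [NeZero n] (X Y : Matrix (Fin n) (Fin n) ℂ)
    (hX : X.PosDef) (hY : Y.PosDef)
    (α β : ℝ)
    (hβ : β = sInf {l : ℝ | (l • X - Y).PosSemidef})
    (hα : α = sSup {m : ℝ | (Y - m • X).PosSemidef})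
    (hαβ : α ≤ β) :
    ∀ τ : ℝ,
      (if β = α then ((α ^ τ) • X)
       else (((β ^ τ - α ^ τ) / (β - α)) • Y +
             ((β * α ^ τ - α * β ^ τ) / (β - α)) • X)).PosDef := by
  classical
  set S := {l : ℝ | (l • X - Y).PosSemidef} with hS
  set T := {m : ℝ | (Y - m • X).PosSemidef} with hT
  obtain ⟨l0, hl0⟩ := exists_smul_sub_posSemidef hX hY.isHermitian
  obtain ⟨k, hk⟩ := exists_smul_sub_posSemidef hY hX.isHermitian
  -- a positive element of T
  have hkmax : (0:ℝ) < max k 1 := lt_of_lt_of_le one_pos (le_max_right _ _)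
  have hk1 : ((max k 1) • Y - X).PosSemidef := by
    have h2 : ((max k 1 - k) • Y).PosSemidef :=
      smul_posSemidef (by linarith [le_max_left k 1]) hY.posSemidef
    have he : (max k 1) • Y - X = (k • Y - X) + (max k 1 - k) • Y := by module
    rw [he]
    exact hk.add h2
  set m0 : ℝ := (max k 1)⁻¹ with hm0
  have hm0pos : 0 < m0 := inv_pos.mpr hkmax
  have hm0T : m0 ∈ T := by
    have h3 := smul_posSemidef hm0pos.le hk1
    have he : m0 • ((max k 1) • Y - X) = Y - m0 • X := by
      rw [smul_sub, smul_smul, hm0, inv_mul_cancel₀ hkmax.ne', one_smul]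
    rwa [he] at h3
  -- a distinguished nonzero vector
  set i0 : Fin n := ⟨0, Nat.pos_of_ne_zero (NeZero.ne n)⟩ with hi0
  set x0 : Fin n → ℂ := Pi.single i0 1 with hx0def
  have hx0 : x0 ≠ 0 := by
    intro h
    have := congrFun h i0
    simp [hx0def] at this
  have hq0 : 0 < Complex.re (star x0 ⬝ᵥ X *ᵥ x0) := by
    have := hX.re_dotProduct_pos hx0
    simpa using this
  -- T is bounded above
  have hTbdd : BddAbove T := by
    refine ⟨Complex.re (star x0 ⬝ᵥ Y *ᵥ x0) / Complex.re (star x0 ⬝ᵥ X *ᵥ x0), fun m hm => ?_⟩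
    have h4 : 0 ≤ Complex.re (star x0 ⬝ᵥ (Y - m • X) *ᵥ x0) :=
      ((posSemidef_iff_re hm.1).mp hm) x0
    rw [re_form_sub_smul] at h4
    rw [le_div_iff₀ hq0]
    linarith
  have hαpos : 0 < α := by
    rw [hα]
    exact lt_of_lt_of_le hm0pos (le_csSup hTbdd hm0T)
  have hβpos : 0 < β := lt_of_lt_of_le hαpos hαβ
  -- Y - α X is PSD
  have hYαX : (Y - α • X).PosSemidef := by
    rw [posSemidef_iff_re (hY.isHermitian.sub (smul_isHermitian hX.isHermitian))]
    intro x
    rw [re_form_sub_smul]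
    have hq : 0 ≤ Complex.re (star x ⬝ᵥ X *ᵥ x) := by
      have := hX.posSemidef.re_dotProduct_nonneg x
      simpa using this
    rcases eq_or_lt_of_le hq with h0 | h0
    · have h5 : 0 ≤ Complex.re (star x ⬝ᵥ (Y - m0 • X) *ᵥ x) :=
        ((posSemidef_iff_re hm0T.1).mp hm0T) x
      rw [re_form_sub_smul, ← h0] at h5
      rw [← h0]
      linarith
    · have h6 : ∀ m ∈ T, m ≤ Complex.re (star x ⬝ᵥ Y *ᵥ x) / Complex.re (star x ⬝ᵥ X *ᵥ x) := by
        intro m hm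
        have h4 : 0 ≤ Complex.re (star x ⬝ᵥ (Y - m • X) *ᵥ x) :=
          ((posSemidef_iff_re hm.1).mp hm) x
        rw [re_form_sub_smul] at h4
        rw [le_div_iff₀ h0]
        linarith
      have h7 : α ≤ Complex.re (star x ⬝ᵥ Y *ᵥ x) / Complex.re (star x ⬝ᵥ X *ᵥ x) := by
        rw [hα]
        exact csSup_le ⟨m0, hm0T⟩ h6
      rw [le_div_iff₀ h0] at h7
      linarith
  -- β X - Y is PSD
  have hβXY : (β • X - Y).PosSemidef := by
    rw [posSemidef_iff_re ((smul_isHermitian hX.isHermitian).sub hY.isHermitian)]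
    intro x
    rw [re_form_smul_sub]
    have hq : 0 ≤ Complex.re (star x ⬝ᵥ X *ᵥ x) := by
      have := hX.posSemidef.re_dotProduct_nonneg x
      simpa using this
    rcases eq_or_lt_of_le hq with h0 | h0
    · have h5 : 0 ≤ Complex.re (star x ⬝ᵥ (l0 • X - Y) *ᵥ x) :=
        ((posSemidef_iff_re hl0.1).mp hl0) x
      rw [re_form_smul_sub, ← h0] at h5
      rw [← h0]
      linarith
    · have h6 : ∀ l ∈ S,
          Complex.re (star x ⬝ᵥ Y *ᵥ x) / Complex.re (star x ⬝ᵥ X *ᵥ x) ≤ l := by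
        intro l hl
        have h4 : 0 ≤ Complex.re (star x ⬝ᵥ (l • X - Y) *ᵥ x) :=
          ((posSemidef_iff_re hl.1).mp hl) x
        rw [re_form_smul_sub] at h4
        rw [div_le_iff₀ h0]
        linarith
      have h7 : Complex.re (star x ⬝ᵥ Y *ᵥ x) / Complex.re (star x ⬝ᵥ X *ᵥ x) ≤ β := by
        rw [hβ]
        exact le_csInf ⟨l0, hl0⟩ h6
      rw [div_le_iff₀ h0] at h7
      linarith
  -- main conclusion
  intro τ
  have hατ : 0 < α ^ τ := Real.rpow_pos_of_pos hαpos τ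
  have hβτ : 0 < β ^ τ := Real.rpow_pos_of_pos hβpos τ
  by_cases hba : β = α
  · rw [if_pos hba]
    exact smul_posDef hατ hX
  · rw [if_neg hba]
    have hlt : α < β := lt_of_le_of_ne hαβ (Ne.symm hba)
    have hne : β - α ≠ 0 := sub_ne_zero.mpr hba
    set c1 : ℝ := (β ^ τ - α ^ τ) / (β - α) with hc1
    rcases le_total 0 c1 with hc | hc
    · have hc2 : (β * α ^ τ - α * β ^ τ) / (β - α) = α ^ τ - c1 * α := by
        rw [hc1]
        field_simp
        ring
      rw [hc2]
      have hrep : c1 • Y + (α ^ τ - c1 * α) • X = c1 • (Y - α • X) + (α ^ τ) • X := by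
        module
      rw [hrep]
      exact Matrix.PosDef.posSemidef_add (smul_posSemidef hc hYαX) (smul_posDef hατ hX)
    · have hc2 : (β * α ^ τ - α * β ^ τ) / (β - α) = β ^ τ - c1 * β := by
        rw [hc1]
        field_simp
        ring
      rw [hc2]
      have hrep : c1 • Y + (β ^ τ - c1 * β) • X = (-c1) • (β • X - Y) + (β ^ τ) • X := by
        module
      rw [hrep]
      exact Matrix.PosDef.posSemidef_add
        (smul_posSemidef (neg_nonneg.mpr hc) hβXY) (smul_posDef hβτ hX)
end

section
/- Let X, Y be positive definite Hermitian matrices with α := m(Y,X), β := M(Y,X), α ≤ β, and let χ(τ) be the projective straight-line path. Then for all τ ∈ [0,1], χ(τ) satisfies α^τ X ≼ χ(τ), i.e., χ(τ) − α^τ X is positive semidefinite. -/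
open Matrix
open scoped ComplexOrder

private lemma real_smul_psd {n : ℕ} {M : Matrix (Fin n) (Fin n) ℂ} {c : ℝ}
    (hc : 0 ≤ c) (hM : M.PosSemidef) : (c • M).PosSemidef := by
  apply Matrix.PosSemidef.of_dotProduct_mulVec_nonneg
  · unfold Matrix.IsHermitian
    rw [conjTranspose_smul, hM.1]
    norm_num
  · intro x
    rw [smul_mulVec, dotProduct_smul, Complex.real_smul]
    exact mul_nonneg (by exact_mod_cast hc) (hM.dotProduct_mulVec_nonneg x)

private lemma sSup_mem_psd {n : ℕ} [NeZero n] (X Y : Matrix (Fin n) (Fin n) ℂ)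
    (hX : X.PosDef) (hY : Y.PosDef) (α : ℝ)
    (hα : α = sSup {m : ℝ | (Y - m • X).PosSemidef}) :
    0 ≤ α ∧ (Y - α • X).PosSemidef := by
  set S := {m : ℝ | (Y - m • X).PosSemidef} with hS
  have h0 : (0:ℝ) ∈ S := by
    simp only [hS, Set.mem_setOf_eq, zero_smul, sub_zero]
    exact hY.posSemidef
  -- key quadratic form facts
  have key : ∀ (m : ℝ), m ∈ S → ∀ x : Fin n → ℂ,
      m * (star x ⬝ᵥ (X *ᵥ x)).re ≤ (star x ⬝ᵥ (Y *ᵥ x)).re := by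
    intro m hm x
    have := hm.dotProduct_mulVec_nonneg x
    rw [sub_mulVec, dotProduct_sub, smul_mulVec, dotProduct_smul,
      Complex.real_smul, Complex.nonneg_iff] at this
    have h1 := this.1
    simp only [Complex.sub_re, Complex.mul_re, Complex.ofReal_re, Complex.ofReal_im,
      zero_mul, sub_zero] at h1
    linarith
  have imzero : ∀ (Z : Matrix (Fin n) (Fin n) ℂ), Z.PosSemidef → ∀ x : Fin n → ℂ,
      (star x ⬝ᵥ (Z *ᵥ x)).im = 0 := by
    intro Z hZ x
    have := (Complex.nonneg_iff.mp (hZ.dotProduct_mulVec_nonneg x)).2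
    exact this.symm
  -- bounded above
  have hbdd : BddAbove S := by
    obtain ⟨x₀, hx₀⟩ : ∃ x₀ : Fin n → ℂ, x₀ ≠ 0 :=
      ⟨fun _ => 1, by
        intro h
        have := congrFun h ⟨0, Nat.pos_of_ne_zero (NeZero.ne n)⟩
        simp at this⟩
    have hXpos : 0 < (star x₀ ⬝ᵥ (X *ᵥ x₀)).re := by
      have := hX.dotProduct_mulVec_pos hx₀
      rw [Complex.lt_def] at this
      exact this.1
    refine ⟨(star x₀ ⬝ᵥ (Y *ᵥ x₀)).re / (star x₀ ⬝ᵥ (X *ᵥ x₀)).re, fun m hm => ?_⟩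
    rw [le_div_iff₀ hXpos]
    exact key m hm x₀
  have hne : S.Nonempty := ⟨0, h0⟩
  have hα0 : 0 ≤ α := hα ▸ le_csSup hbdd h0
  refine ⟨hα0, Matrix.PosSemidef.of_dotProduct_mulVec_nonneg ?_ ?_⟩
  · exact (hY.posSemidef.1.sub ((real_smul_psd hα0 hX.posSemidef).1))
  · intro x
    have ha : 0 ≤ (star x ⬝ᵥ (X *ᵥ x)).re := hX.posSemidef.re_dotProduct_nonneg x
    have hb : α * (star x ⬝ᵥ (X *ᵥ x)).re ≤ (star x ⬝ᵥ (Y *ᵥ x)).re := by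
      rcases lt_or_eq_of_le ha with h | h
      · have hsup : sSup S ≤ (star x ⬝ᵥ (Y *ᵥ x)).re / (star x ⬝ᵥ (X *ᵥ x)).re :=
          csSup_le hne fun m hm => (le_div_iff₀ h).mpr (key m hm x)
        rw [hα]
        exact (le_div_iff₀ h).mp hsup
      · have hb0 : 0 ≤ (star x ⬝ᵥ (Y *ᵥ x)).re := hY.posSemidef.re_dotProduct_nonneg x
        rw [← h, mul_zero]
        exact hb0
    rw [sub_mulVec, dotProduct_sub, smul_mulVec, dotProduct_smul,
      Complex.real_smul, Complex.nonneg_iff]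
    constructor
    · simp only [Complex.sub_re, Complex.mul_re, Complex.ofReal_re, Complex.ofReal_im,
        zero_mul, sub_zero]
      linarith
    · have hYim := (Complex.nonneg_iff.mp (hY.posSemidef.dotProduct_mulVec_nonneg x)).2
      have hXim := (Complex.nonneg_iff.mp (hX.posSemidef.dotProduct_mulVec_nonneg x)).2
      simp only [Complex.sub_im, Complex.mul_im, Complex.ofReal_re, Complex.ofReal_im,
        zero_mul, add_zero]
      rw [← hYim, ← hXim]
      ring

/-- With `α := m(Y,X)`, `β := M(Y,X)`, `α ≤ β`, the projective
straight-line path satisfies `α^τ X ≼ χ(τ)` for all `τ ∈ [0,1]`. -/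
theorem projective_path_lower_bound
    {n : ℕ} [NeZero n] (X Y : Matrix (Fin n) (Fin n) ℂ)
    (hX : X.PosDef) (hY : Y.PosDef)
    (α β : ℝ)
    (hβ : β = sInf {l : ℝ | (l • X - Y).PosSemidef})
    (hα : α = sSup {m : ℝ | (Y - m • X).PosSemidef})
    (hαβ : α ≤ β) :
    ∀ χ : ℝ → Matrix (Fin n) (Fin n) ℂ,
      (χ = fun τ => if β = α then ((α ^ τ) • X)
            else (((β ^ τ - α ^ τ) / (β - α)) • Y +
                  ((β * α ^ τ - α * β ^ τ) / (β - α)) • X)) →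
      ∀ τ ∈ Set.Icc (0:ℝ) 1, (χ τ - (α ^ τ) • X).PosSemidef := by
  obtain ⟨hα0, hpsd⟩ := sSup_mem_psd X Y hX hY α hα
  intro χ hχ τ hτ
  subst hχ
  by_cases hba : β = α
  · simp only [if_pos hba, sub_self]
    exact Matrix.PosSemidef.zero (n := Fin n) (R := ℂ)
  · simp only [if_neg hba]
    have hlt : α < β := lt_of_le_of_ne hαβ (Ne.symm hba)
    have hden : β - α ≠ 0 := sub_ne_zero.mpr (Ne.symm (ne_of_lt hlt))
    set c : ℝ := (β ^ τ - α ^ τ) / (β - α) with hc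
    have hc0 : 0 ≤ c :=
      div_nonneg (sub_nonneg.mpr (Real.rpow_le_rpow hα0 hαβ hτ.1)) (by linarith)
    have heq : c • Y + ((β * α ^ τ - α * β ^ τ) / (β - α)) • X - (α ^ τ) • X
        = c • (Y - α • X) := by
      have hd : (β * α ^ τ - α * β ^ τ) / (β - α) - α ^ τ = -(c * α) := by
        rw [hc]
        field_simp
        ring
      rw [smul_sub, smul_smul]
      rw [sub_eq_iff_eq_add]
      rw [show c • Y - (c * α) • X + (α ^ τ) • X = c • Y + (((α:ℝ) ^ τ) - c * α) • X by
        rw [sub_smul]; module]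
      congr 1
      congr 1
      linarith [hd]
    rw [heq]
    exact real_smul_psd hc0 hpsd
end

section
/- Let Φ₁, Φ₂ : [−π,π] → ℂ^{n×n} be continuous Hermitian positive-definite valued functions and T : [−π,π] → ℂ^{n×n} a continuous function with T(θ) invertible for every θ. Then M(T Φ₁ T*, T Φ₂ T*) = M(Φ₁, Φ₂), where M(Φ,Ψ) := inf{λ : Φ(θ) ≼ λ Ψ(θ) for all θ}. Consequently the Thompson distance d_T(Φ₁,Φ₂) := log max{M(Φ₁,Φ₂), M(Φ₂,Φ₁)} is filtering invariant: d_T(TΦ₁T*, TΦ₂T*) = d_T(Φ₁,Φ₂). -/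
open Matrix
open scoped ComplexOrder

/-- `M(Φ,Ψ) := inf {λ : Φ(θ) ≼ λ Ψ(θ) for all θ ∈ [-π,π]}` (frequency-wise
Loewner order). -/
noncomputable def Mfun {n : ℕ} (Φ Ψ : ℝ → Matrix (Fin n) (Fin n) ℂ) : ℝ :=
  sInf {l : ℝ | ∀ θ ∈ Set.Icc (-Real.pi) Real.pi, (l • Ψ θ - Φ θ).PosSemidef}

/-- Thompson distance between frequency-wise positive definite matrix functions. -/
noncomputable def dTfun {n : ℕ} (Φ Ψ : ℝ → Matrix (Fin n) (Fin n) ℂ) : ℝ :=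
  Real.log (max (Mfun Φ Ψ) (Mfun Ψ Φ))

lemma conj_psd_iff {n : ℕ} (A B : Matrix (Fin n) (Fin n) ℂ) (hB : IsUnit B.det) :
    (B * A * Bᴴ).PosSemidef ↔ A.PosSemidef := by
  constructor
  · intro h
    have := h.mul_mul_conjTranspose_same B⁻¹
    have hBB : B⁻¹ * B = 1 := nonsing_inv_mul B hB
    rw [show B⁻¹ * (B * A * Bᴴ) * B⁻¹ᴴ = (B⁻¹ * B) * A * (B⁻¹ * B)ᴴ by
      simp [Matrix.conjTranspose_mul, Matrix.mul_assoc]] at this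
    simpa [hBB] using this
  · intro h
    exact h.mul_mul_conjTranspose_same B

lemma Mfun_conj {n : ℕ} (Φ Ψ T : ℝ → Matrix (Fin n) (Fin n) ℂ)
    (hT : ∀ θ ∈ Set.Icc (-Real.pi) Real.pi, IsUnit (T θ).det) :
    Mfun (fun θ => T θ * Φ θ * (T θ)ᴴ) (fun θ => T θ * Ψ θ * (T θ)ᴴ) = Mfun Φ Ψ := by
  unfold Mfun
  congr 1
  ext l
  refine forall₂_congr fun θ hθ => ?_
  have hrw : l • (T θ * Ψ θ * (T θ)ᴴ) - T θ * Φ θ * (T θ)ᴴ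
      = T θ * (l • Ψ θ - Φ θ) * (T θ)ᴴ := by
    rw [Matrix.mul_sub, Matrix.sub_mul, Matrix.mul_smul, Matrix.smul_mul]
  rw [hrw, conj_psd_iff _ _ (hT θ hθ)]

/-- Filtering invariance: for a frequency-wise invertible filter `T`,
`M(TΦ₁T*, TΦ₂T*) = M(Φ₁,Φ₂)`, hence the Thompson distance is filtering invariant. -/
theorem thompson_spectral_filtering_invariance
    {n : ℕ} [NeZero n] (Φ₁ Φ₂ T : ℝ → Matrix (Fin n) (Fin n) ℂ)
    (hc1 : ContinuousOn Φ₁ (Set.Icc (-Real.pi) Real.pi))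
    (hc2 : ContinuousOn Φ₂ (Set.Icc (-Real.pi) Real.pi))
    (hcT : ContinuousOn T (Set.Icc (-Real.pi) Real.pi))
    (h1 : ∀ θ ∈ Set.Icc (-Real.pi) Real.pi, (Φ₁ θ).PosDef)
    (h2 : ∀ θ ∈ Set.Icc (-Real.pi) Real.pi, (Φ₂ θ).PosDef)
    (hT : ∀ θ ∈ Set.Icc (-Real.pi) Real.pi, IsUnit (T θ).det) :
    Mfun (fun θ => T θ * Φ₁ θ * (T θ)ᴴ) (fun θ => T θ * Φ₂ θ * (T θ)ᴴ) = Mfun Φ₁ Φ₂ ∧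
    dTfun (fun θ => T θ * Φ₁ θ * (T θ)ᴴ) (fun θ => T θ * Φ₂ θ * (T θ)ᴴ) = dTfun Φ₁ Φ₂ := by
  refine ⟨Mfun_conj Φ₁ Φ₂ T hT, ?_⟩
  unfold dTfun
  rw [Mfun_conj Φ₁ Φ₂ T hT, Mfun_conj Φ₂ Φ₁ T hT]
end

section
/- Let Φ₁, Φ₂ : [−π,π] → ℂ^{n×n} be continuous Hermitian positive-definite valued functions with α := m(Φ₂,Φ₁) := (M(Φ₁,Φ₂))^{-1}, β := M(Φ₂,Φ₁), β ≠ α. Then for every τ ∈ ℝ, the path χ_T(τ)(θ) := ((β^τ − α^τ)/(β − α)) Φ₂(θ) + ((β α^τ − α β^τ)/(β − α)) Φ₁(θ) is Hermitian positive definite for every θ ∈ [−π,π]. -/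
open Matrix
open scoped ComplexOrder

namespace FinslerAux

variable {n : ℕ}

/-- Real quadratic form of a complex matrix. -/
noncomputable def q (A : Matrix (Fin n) (Fin n) ℂ) (x : Fin n → ℂ) : ℝ :=
  (star x ⬝ᵥ A *ᵥ x).re

lemma herm_quad_real {A : Matrix (Fin n) (Fin n) ℂ} (hA : A.IsHermitian) (x : Fin n → ℂ) :
    star x ⬝ᵥ A *ᵥ x = ((q A x : ℝ) : ℂ) := by
  have hsc : star (star x ⬝ᵥ A *ᵥ x) = star x ⬝ᵥ A *ᵥ x := by
    conv_rhs => rw [star_dotProduct]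
    apply congrArg star
    rw [star_mulVec, ← dotProduct_mulVec, hA.eq]
  have : (starRingEnd ℂ) (star x ⬝ᵥ A *ᵥ x) = star x ⬝ᵥ A *ᵥ x := hsc
  exact (Complex.conj_eq_iff_re.mp this).symm

lemma q_nonneg {A : Matrix (Fin n) (Fin n) ℂ} (hA : A.PosSemidef) (x : Fin n → ℂ) :
    0 ≤ q A x := by
  have := (Complex.le_def.mp (hA.dotProduct_mulVec_nonneg x)).1
  simpa [q] using this

lemma q_pos {A : Matrix (Fin n) (Fin n) ℂ} (hA : A.PosDef) {x : Fin n → ℂ} (hx : x ≠ 0) :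
    0 < q A x := by
  have := (Complex.lt_def.mp (hA.dotProduct_mulVec_pos hx)).1
  simpa [q] using this

lemma posSemidef_of_q {A : Matrix (Fin n) (Fin n) ℂ} (hA : A.IsHermitian)
    (h : ∀ x, 0 ≤ q A x) : A.PosSemidef := by
  refine PosSemidef.of_dotProduct_mulVec_nonneg hA fun x => ?_
  rw [herm_quad_real hA]
  exact Complex.zero_le_real.mpr (h x)

lemma posDef_of_q {A : Matrix (Fin n) (Fin n) ℂ} (hA : A.IsHermitian)
    (h : ∀ x, x ≠ 0 → 0 < q A x) : A.PosDef := by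
  refine PosDef.of_dotProduct_mulVec_pos hA fun ⦃x⦄ hx => ?_
  rw [herm_quad_real hA]
  exact Complex.zero_lt_real.mpr (h x hx)

lemma herm_smul (r : ℝ) {A : Matrix (Fin n) (Fin n) ℂ} (hA : A.IsHermitian) :
    (r • A).IsHermitian := by
  show (r • A)ᴴ = r • A
  rw [conjTranspose_smul, star_trivial, hA.eq]

lemma q_smul (r : ℝ) (A : Matrix (Fin n) (Fin n) ℂ) (x : Fin n → ℂ) :
    q (r • A) x = r * q A x := by
  simp [q, smul_mulVec, dotProduct_smul, Complex.real_smul]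

lemma q_sub (A B : Matrix (Fin n) (Fin n) ℂ) (x : Fin n → ℂ) :
    q (A - B) x = q A x - q B x := by
  simp [q, sub_mulVec, dotProduct_sub]

lemma q_add (A B : Matrix (Fin n) (Fin n) ℂ) (x : Fin n → ℂ) :
    q (A + B) x = q A x + q B x := by
  simp [q, add_mulVec, dotProduct_add]

lemma q_smul_vec (r : ℝ) (A : Matrix (Fin n) (Fin n) ℂ) (x : Fin n → ℂ) :
    q A (r • x) = r ^ 2 * q A x := by
  have hstar : star (r • x) = r • star x := by
    rw [star_smul, star_trivial]
  simp [q, hstar, mulVec_smul, smul_dotProduct, dotProduct_smul, Complex.real_smul]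
  ring

lemma posSemidef_smul {A : Matrix (Fin n) (Fin n) ℂ} (hA : A.PosSemidef) {r : ℝ}
    (hr : 0 ≤ r) : (r • A).PosSemidef := by
  refine posSemidef_of_q (herm_smul r hA.1) fun x => ?_
  rw [q_smul]
  exact mul_nonneg hr (q_nonneg hA x)

lemma posDef_smul {A : Matrix (Fin n) (Fin n) ℂ} (hA : A.PosDef) {r : ℝ}
    (hr : 0 < r) : (r • A).PosDef := by
  refine posDef_of_q (herm_smul r hA.1) fun x hx => ?_
  rw [q_smul]
  exact mul_pos hr (q_pos hA hx)

lemma contOn (Φ : ℝ → Matrix (Fin n) (Fin n) ℂ)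
    (hc : ContinuousOn Φ (Set.Icc (-Real.pi) Real.pi)) :
    ContinuousOn (fun p : ℝ × (Fin n → ℂ) => q (Φ p.1) p.2)
      ((Set.Icc (-Real.pi) Real.pi) ×ˢ (Metric.sphere (0 : Fin n → ℂ) 1)) := by
  have hrw : (fun p : ℝ × (Fin n → ℂ) => q (Φ p.1) p.2)
      = fun p => (∑ i, star (p.2 i) * ∑ j, Φ p.1 i j * p.2 j).re := by
    funext p
    simp [q, dotProduct, mulVec]
  have hmap : Set.MapsTo (Prod.fst : ℝ × (Fin n → ℂ) → ℝ)
      ((Set.Icc (-Real.pi) Real.pi) ×ˢ (Metric.sphere (0 : Fin n → ℂ) 1))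
      (Set.Icc (-Real.pi) Real.pi) := fun p hp => hp.1
  rw [hrw]
  apply Complex.continuous_re.comp_continuousOn
  apply continuousOn_finset_sum
  intro i _
  apply ContinuousOn.mul
  · exact (continuous_star.comp ((continuous_apply i).comp continuous_snd)).continuousOn
  · apply continuousOn_finset_sum
    intro j _
    apply ContinuousOn.mul
    · exact ((continuous_apply j).comp (continuous_apply i)).comp_continuousOn
        (hc.comp continuous_fst.continuousOn hmap)
    · exact ((continuous_apply j).comp continuous_snd).continuousOn

lemma zero_mem_Icc : (0 : ℝ) ∈ Set.Icc (-Real.pi) Real.pi := by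
  constructor <;> nlinarith [Real.pi_pos]

/-- Existence of a uniform Loewner bound, by compactness. -/
lemma exists_bound [NeZero n] (Φ Ψ : ℝ → Matrix (Fin n) (Fin n) ℂ)
    (hcΦ : ContinuousOn Φ (Set.Icc (-Real.pi) Real.pi))
    (hcΨ : ContinuousOn Ψ (Set.Icc (-Real.pi) Real.pi))
    (hΦ : ∀ θ ∈ Set.Icc (-Real.pi) Real.pi, (Φ θ).PosDef)
    (hΨ : ∀ θ ∈ Set.Icc (-Real.pi) Real.pi, (Ψ θ).PosDef) :
    ∃ l : ℝ, ∀ θ ∈ Set.Icc (-Real.pi) Real.pi, (l • Ψ θ - Φ θ).PosSemidef := by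
  haveI : Nonempty (Fin n) := ⟨⟨0, Nat.pos_of_ne_zero (NeZero.ne n)⟩⟩
  haveI : Nontrivial (Fin n → ℂ) := by
    refine ⟨0, (fun _ => 1), fun h => ?_⟩
    have := congrFun h (Classical.arbitrary (Fin n))
    simp at this
  obtain ⟨u, hu⟩ := NormedSpace.sphere_nonempty (E := Fin n → ℂ) (x := 0) (r := 1)
    |>.mpr zero_le_one
  set K := (Set.Icc (-Real.pi) Real.pi) ×ˢ (Metric.sphere (0 : Fin n → ℂ) 1) with hK
  have hKc : IsCompact K := isCompact_Icc.prod (isCompact_sphere 0 1)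
  have hKne : K.Nonempty := ⟨(0, u), ⟨zero_mem_Icc, hu⟩⟩
  obtain ⟨pC, hpCK, hC⟩ := hKc.exists_isMaxOn hKne (contOn Φ hcΦ)
  obtain ⟨pc, hpcK, hc⟩ := hKc.exists_isMinOn hKne (contOn Ψ hcΨ)
  set C := q (Φ pC.1) pC.2 with hCdef
  set c := q (Ψ pc.1) pc.2 with hcdef
  have hpc2 : pc.2 ≠ 0 := by
    have : ‖pc.2‖ = 1 := mem_sphere_zero_iff_norm.mp hpcK.2
    intro h; rw [h] at this; simp at this
  have hpC2 : pC.2 ≠ 0 := by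
    have : ‖pC.2‖ = 1 := mem_sphere_zero_iff_norm.mp hpCK.2
    intro h; rw [h] at this; simp at this
  have hcpos : 0 < c := q_pos (hΨ pc.1 hpcK.1) hpc2
  have hCpos : 0 < C := q_pos (hΦ pC.1 hpCK.1) hpC2
  refine ⟨C / c, fun θ hθ => ?_⟩
  refine posSemidef_of_q ((herm_smul _ (hΨ θ hθ).1).sub (hΦ θ hθ).1) fun x => ?_
  rw [q_sub, q_smul]
  by_cases hx : x = 0
  · simp [hx, q]
  · set r : ℝ := ‖x‖ with hr
    have hrpos : 0 < r := norm_pos_iff.mpr hx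
    set v : Fin n → ℂ := r⁻¹ • x with hv
    have hxv : x = r • v := by
      rw [hv, smul_smul, mul_inv_cancel₀ hrpos.ne', one_smul]
    have hvS : v ∈ Metric.sphere (0 : Fin n → ℂ) 1 := by
      rw [mem_sphere_zero_iff_norm, hv, norm_smul]
      rw [norm_inv, Real.norm_eq_abs, abs_of_pos hrpos, ← hr]
      exact inv_mul_cancel₀ hrpos.ne' 
    have hmem : (θ, v) ∈ K := ⟨hθ, hvS⟩
    have h1 : q (Φ θ) v ≤ C := hC hmem
    have h2 : c ≤ q (Ψ θ) v := hc hmem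
    have h4 : q (Φ θ) v ≤ C / c * q (Ψ θ) v := by
      have h5 : C / c * c = C := div_mul_cancel₀ C hcpos.ne'
      have h6 : 0 ≤ C / c := div_nonneg hCpos.le hcpos.le
      nlinarith [mul_le_mul_of_nonneg_left h2 h6]
    have e1 : q (Φ θ) x = r ^ 2 * q (Φ θ) v := by
      conv_lhs => rw [hxv]
      exact q_smul_vec r _ v
    have e2 : q (Ψ θ) x = r ^ 2 * q (Ψ θ) v := by
      conv_lhs => rw [hxv]
      exact q_smul_vec r _ v
    rw [e1, e2]
    nlinarith [mul_nonneg (sq_nonneg r) (sub_nonneg.mpr h4)]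

/-- The infimum defining `Mfun` is itself a valid Loewner bound. -/
lemma mfun_bound (Φ Ψ : ℝ → Matrix (Fin n) (Fin n) ℂ)
    (hne : {l : ℝ | ∀ θ ∈ Set.Icc (-Real.pi) Real.pi,
        (l • Ψ θ - Φ θ).PosSemidef}.Nonempty)
    (hΦ : ∀ θ ∈ Set.Icc (-Real.pi) Real.pi, (Φ θ).PosDef)
    (hΨ : ∀ θ ∈ Set.Icc (-Real.pi) Real.pi, (Ψ θ).PosDef) :
    ∀ θ ∈ Set.Icc (-Real.pi) Real.pi, ((Mfun Φ Ψ) • Ψ θ - Φ θ).PosSemidef := by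
  intro θ hθ
  set S := {l : ℝ | ∀ θ ∈ Set.Icc (-Real.pi) Real.pi, (l • Ψ θ - Φ θ).PosSemidef} with hS
  refine posSemidef_of_q ((herm_smul _ (hΨ θ hθ).1).sub (hΦ θ hθ).1) fun x => ?_
  rw [q_sub, q_smul]
  set a := q (Ψ θ) x with ha
  set b := q (Φ θ) x with hb
  have hann : 0 ≤ a := q_nonneg (hΨ θ hθ).posSemidef x
  have key : ∀ l ∈ S, b ≤ l * a := by
    intro l hl
    have := q_nonneg (hl θ hθ) x
    rw [q_sub, q_smul] at this
    linarith
  have hMfun : Mfun Φ Ψ = sInf S := rfl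
  rw [hMfun]
  by_contra hcon
  push_neg at hcon
  rcases eq_or_lt_of_le hann with h0 | hapos
  · obtain ⟨l, hl⟩ := hne
    have := key l hl
    rw [← h0] at this hcon
    simp at this hcon
    linarith
  · have hlt : sInf S < b / a := by
      rw [lt_div_iff₀ hapos]
      linarith
    obtain ⟨l, hl, hlb⟩ := exists_lt_of_csInf_lt hne hlt
    have h1 := key l hl
    have h2 : l * a < b := (lt_div_iff₀ hapos).mp hlb
    linarith

end FinslerAux

open FinslerAux

/-- With `α := m(Φ₂,Φ₁) = M(Φ₁,Φ₂)⁻¹` and `β := M(Φ₂,Φ₁)`, `β ≠ α`,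
the Finslerian geodesic path
`χ_T(τ) = ((β^τ − α^τ)/(β − α)) Φ₂ + ((βα^τ − αβ^τ)/(β − α)) Φ₁`
is Hermitian positive definite at every frequency `θ ∈ [-π,π]`, for every `τ ∈ ℝ`. -/
theorem finsler_geodesic_spectral_posdef
    {n : ℕ} [NeZero n] (Φ₁ Φ₂ : ℝ → Matrix (Fin n) (Fin n) ℂ)
    (hc1 : ContinuousOn Φ₁ (Set.Icc (-Real.pi) Real.pi))
    (hc2 : ContinuousOn Φ₂ (Set.Icc (-Real.pi) Real.pi))
    (h1 : ∀ θ ∈ Set.Icc (-Real.pi) Real.pi, (Φ₁ θ).PosDef)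
    (h2 : ∀ θ ∈ Set.Icc (-Real.pi) Real.pi, (Φ₂ θ).PosDef)
    (α β : ℝ) (hα : α = (Mfun Φ₁ Φ₂)⁻¹) (hβ : β = Mfun Φ₂ Φ₁) (hne : β ≠ α) :
    ∀ τ : ℝ, ∀ θ ∈ Set.Icc (-Real.pi) Real.pi,
      (((β ^ τ - α ^ τ) / (β - α)) • Φ₂ θ +
       ((β * α ^ τ - α * β ^ τ) / (β - α)) • Φ₁ θ).PosDef := by
  -- Set up the two Loewner bounds.
  haveI : Nonempty (Fin n) := ⟨⟨0, Nat.pos_of_ne_zero (NeZero.ne n)⟩⟩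
  haveI : Nontrivial (Fin n → ℂ) := by
    refine ⟨0, (fun _ => 1), fun h => ?_⟩
    have := congrFun h (Classical.arbitrary (Fin n))
    simp at this
  obtain ⟨x₀, hx₀⟩ := exists_ne (0 : Fin n → ℂ)
  have h0I : (0 : ℝ) ∈ Set.Icc (-Real.pi) Real.pi := zero_mem_Icc
  have hP12 : ∀ θ ∈ Set.Icc (-Real.pi) Real.pi,
      ((Mfun Φ₁ Φ₂) • Φ₂ θ - Φ₁ θ).PosSemidef :=
    mfun_bound Φ₁ Φ₂ (exists_bound Φ₁ Φ₂ hc1 hc2 h1 h2) h1 h2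
  have hP21 : ∀ θ ∈ Set.Icc (-Real.pi) Real.pi,
      (β • Φ₁ θ - Φ₂ θ).PosSemidef := by
    rw [hβ]
    exact mfun_bound Φ₂ Φ₁ (exists_bound Φ₂ Φ₁ hc2 hc1 h2 h1) h2 h1
  set γ : ℝ := Mfun Φ₁ Φ₂ with hγ
  have b1 : 0 < q (Φ₁ 0) x₀ := q_pos (h1 0 h0I) hx₀
  have b2 : 0 < q (Φ₂ 0) x₀ := q_pos (h2 0 h0I) hx₀
  have hq12 : 0 ≤ γ * q (Φ₂ 0) x₀ - q (Φ₁ 0) x₀ := by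
    have := q_nonneg (hP12 0 h0I) x₀
    rwa [q_sub, q_smul] at this
  have hq21 : 0 ≤ β * q (Φ₁ 0) x₀ - q (Φ₂ 0) x₀ := by
    have := q_nonneg (hP21 0 h0I) x₀
    rwa [q_sub, q_smul] at this
  have hγpos : 0 < γ := by
    by_contra h'
    push_neg at h'
    nlinarith [mul_nonneg (neg_nonneg.mpr h') b2.le]
  have hβpos : 0 < β := by
    by_contra h'
    push_neg at h'
    nlinarith [mul_nonneg (neg_nonneg.mpr h') b1.le]
  have hαpos : 0 < α := by rw [hα]; exact inv_pos.mpr hγpos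
  have hαΦ : ∀ θ ∈ Set.Icc (-Real.pi) Real.pi, (Φ₂ θ - α • Φ₁ θ).PosSemidef := by
    intro θ hθ
    have h := posSemidef_smul (hP12 θ hθ) (inv_nonneg.mpr hγpos.le)
    have heq : γ⁻¹ • (γ • Φ₂ θ - Φ₁ θ) = Φ₂ θ - α • Φ₁ θ := by
      rw [smul_sub, smul_smul, inv_mul_cancel₀ hγpos.ne', one_smul, hα, hγ]
    rwa [heq] at h
  have hαβ : α < β := by
    have hαq : 0 ≤ q (Φ₂ 0) x₀ - α * q (Φ₁ 0) x₀ := by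
      have := q_nonneg (hαΦ 0 h0I) x₀
      rwa [q_sub, q_smul] at this
    have hle : α ≤ β := by nlinarith
    exact lt_of_le_of_ne hle (Ne.symm hne)
  have hβα : β - α ≠ 0 := sub_ne_zero.mpr hne
  intro τ θ hθ
  have hατ : 0 < α ^ τ := Real.rpow_pos_of_pos hαpos τ
  have hβτ : 0 < β ^ τ := Real.rpow_pos_of_pos hβpos τ
  set c₂ : ℝ := (β ^ τ - α ^ τ) / (β - α) with hc₂
  set c₁ : ℝ := (β * α ^ τ - α * β ^ τ) / (β - α) with hc₁
  rcases le_or_gt 0 c₂ with hsgn | hsgn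
  · have hkey : c₂ * α + c₁ = α ^ τ := by
      rw [hc₂, hc₁]
      field_simp
      ring
    have heq : c₂ • Φ₂ θ + c₁ • Φ₁ θ
        = c₂ • (Φ₂ θ - α • Φ₁ θ) + (α ^ τ) • Φ₁ θ := by
      rw [show c₁ = α ^ τ - c₂ * α from by linarith, smul_sub, smul_smul, sub_smul]
      abel
    rw [heq]
    exact Matrix.PosDef.posSemidef_add (posSemidef_smul (hαΦ θ hθ) hsgn) (posDef_smul (h1 θ hθ) hατ)
  · have hkey : c₂ * β + c₁ = β ^ τ := by
      rw [hc₂, hc₁]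
      field_simp
      ring
    have heq : c₂ • Φ₂ θ + c₁ • Φ₁ θ
        = (-c₂) • (β • Φ₁ θ - Φ₂ θ) + (β ^ τ) • Φ₁ θ := by
      rw [show c₁ = β ^ τ - c₂ * β from by linarith, neg_smul, smul_sub, smul_smul, sub_smul]
      abel
    rw [heq]
    exact Matrix.PosDef.posSemidef_add (posSemidef_smul (hP21 θ hθ) (neg_nonneg.mpr hsgn.le))
      (posDef_smul (h1 θ hθ) hβτ)
end
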